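/- Let d ≥ 1 be an integer, let R > 0, and let g : ℂ → ℂ be holomorphic on {z : |z| > R} with polynomial growth at infinity (there exist C > 0 and m ∈ ℕ with |g(z)| ≤ C|z|^m for all |z| > R). Then there exist R' ≥ R, a function f holomorphic on {z : |z| > R'} with polynomial growth at infinity, and complex constants c_{−1}, c_{0}, …, c_{d−2} such that g(z) = f'(z) + d·z^{d−1}·f(z) + Σ_{j=−1}^{d−2} c_j z^{j} for all |z| > R'. Equivalently, every differential g(z)e^{z^d} dz with g meromorphic at ∞ is congruent, modulo differentials d(f(z)e^{z^d}) with f meromorphic at ∞, to a combination of z^{j}e^{z^d} dz, −1 ≤ j ≤ d−2. -/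

import Mathlib

open Finset

section AUX

lemma aux_preconn {R' : ℝ} (h : 0 ≤ R') : IsPreconnected {z : ℂ | R' < ‖z‖} := by
  have himage : (fun p : ℝ × ℝ => ((R' + Real.exp p.1 : ℝ) : ℂ) * Complex.exp (p.2 * Complex.I)) ''
      Set.univ = {z : ℂ | R' < ‖z‖} := by
    ext z
    simp only [Set.image_univ, Set.mem_range, Set.mem_setOf_eq]
    constructor
    · rintro ⟨⟨t, θ⟩, rfl⟩
      rw [norm_mul, Complex.norm_exp_ofReal_mul_I, mul_one, Complex.norm_real, Real.norm_eq_abs,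
        abs_of_nonneg (by positivity)]
      have := Real.exp_pos t
      linarith
    · intro hz
      refine ⟨⟨Real.log (‖z‖ - R'), z.arg⟩, ?_⟩
      have h1 : Real.exp (Real.log (‖z‖ - R')) = ‖z‖ - R' :=
        Real.exp_log (by linarith)
      rw [h1]
      have : (R' + (‖z‖ - R')) = ‖z‖ := by ring
      rw [this]
      exact Complex.norm_mul_exp_arg_mul_I z
  rw [← himage]
  refine isPreconnected_univ.image _ (Continuous.continuousOn ?_)
  exact (Complex.continuous_ofReal.comp ((continuous_const.add Real.continuous_exp).comp continuous_fst)).mul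
    (Complex.continuous_exp.comp ((Complex.continuous_ofReal.comp continuous_snd).mul continuous_const))



lemma aux_expand {R : ℝ} (hR : 0 < R) {g : ℂ → ℂ}
    (hg : DifferentiableOn ℂ g {z : ℂ | R < ‖z‖}) {C : ℝ} (hC : 0 < C) {m : ℕ}
    (hgrow : ∀ z : ℂ, R < ‖z‖ → ‖(g z)‖ ≤ C * ‖z‖ ^ m) :
    ∃ β : ℕ → ℂ, ∃ A : ℝ, 0 < A ∧ (∀ n, ‖β n‖ ≤ A * (R + 2) ^ n) ∧
      ∀ z : ℂ, R + 1 < ‖z‖ → HasSum (fun n : ℕ => β n * z ^ ((m : ℤ) - n)) (g z) := by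
  have hopen : IsOpen {z : ℂ | R < ‖z‖} :=
    isOpen_lt continuous_const continuous_norm
  set G : ℂ → ℂ := fun w => w ^ m * g w⁻¹ with hG
  -- G is differentiable on the punctured ball
  have hGd : DifferentiableOn ℂ G (Metric.ball (0 : ℂ) R⁻¹ \ {0}) := by
    intro w hw
    obtain ⟨hw1, hw2⟩ := hw
    have hw0 : w ≠ 0 := hw2
    have habs : ‖w‖ < R⁻¹ := by simpa [Complex.dist_eq] using hw1
    have hwinv : R < ‖w⁻¹‖ := by
      rw [norm_inv]
      have h1 : 0 < ‖w‖ := by simpa using hw0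
      rw [lt_inv_comm₀ hR h1]
      exact habs
    have : DifferentiableAt ℂ g w⁻¹ :=
      (hg.differentiableAt (hopen.mem_nhds hwinv))
    exact ((differentiableAt_pow m).mul (this.comp w (differentiableAt_inv hw0))).differentiableWithinAt
  -- G is bounded
  have hGb : BddAbove (norm ∘ G '' (Metric.ball (0 : ℂ) R⁻¹ \ {0})) := by
    refine ⟨C, ?_⟩
    rintro x ⟨w, ⟨hw1, hw2⟩, rfl⟩
    have hw0 : (w : ℂ) ≠ 0 := hw2
    have habs : ‖w‖ < R⁻¹ := by simpa [Complex.dist_eq] using hw1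
    have h1 : 0 < ‖w‖ := by simpa using hw0
    have hwinv : R < ‖w⁻¹‖ := by
      rw [norm_inv, lt_inv_comm₀ hR h1]; exact habs
    have hb := hgrow _ hwinv
    have : ‖G w‖ = ‖w‖ ^ m * ‖(g w⁻¹)‖ := by
      simp [hG, norm_mul, norm_pow]
    rw [Function.comp_apply, this]
    calc ‖w‖ ^ m * ‖(g w⁻¹)‖
        ≤ ‖w‖ ^ m * (C * ‖w⁻¹‖ ^ m) := by
          apply mul_le_mul_of_nonneg_left hb (by positivity)
      _ = C * (‖w‖ * ‖w⁻¹‖) ^ m := by rw [mul_pow]; ring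
      _ = C := by rw [norm_inv, mul_inv_cancel₀ (ne_of_gt h1)]; simp
  have hball : Metric.ball (0 : ℂ) R⁻¹ ∈ nhds (0 : ℂ) :=
    Metric.ball_mem_nhds 0 (by positivity)
  set H : ℂ → ℂ := Function.update G 0 (Filter.limUnder (nhdsWithin 0 {(0:ℂ)}ᶜ) G) with hH
  have hHd : DifferentiableOn ℂ H (Metric.ball (0 : ℂ) R⁻¹) :=
    Complex.differentiableOn_update_limUnder_of_bddAbove hball hGd hGb
  have hHG : ∀ w : ℂ, w ≠ 0 → H w = G w := fun w hw => Function.update_of_ne hw _ _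
  -- power series of H on the closed ball of radius (R+1)⁻¹
  have hR1 : (0:ℝ) < (R + 1)⁻¹ := by positivity
  set r₁ : NNReal := ⟨(R + 1)⁻¹, hR1.le⟩ with hr₁
  have hsub : Metric.closedBall (0 : ℂ) r₁ ⊆ Metric.ball (0 : ℂ) R⁻¹ := by
    apply Metric.closedBall_subset_ball
    show (R + 1)⁻¹ < R⁻¹
    exact inv_strictAnti₀ hR (by linarith)
  have hr₁0 : 0 < r₁ := by
    rw [← NNReal.coe_lt_coe]; exact hR1
  have hP : HasFPowerSeriesOnBall H (cauchyPowerSeries H 0 r₁) 0 r₁ :=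
    (hHd.mono hsub).hasFPowerSeriesOnBall hr₁0
  set p := cauchyPowerSeries H 0 r₁ with hp
  refine ⟨fun n => p.coeff n, ?_⟩
  -- coefficient bounds
  have hR2 : (0:ℝ) < (R + 2)⁻¹ := by positivity
  set r₂ : NNReal := ⟨(R+2)⁻¹, hR2.le⟩ with hr₂
  have hrlt : (r₂ : ENNReal) < p.radius := by
    refine lt_of_lt_of_le ?_ hP.r_le
    rw [ENNReal.coe_lt_coe, ← NNReal.coe_lt_coe]
    show (R + 2)⁻¹ < (R + 1)⁻¹
    exact inv_strictAnti₀ (by linarith) (by linarith)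
  obtain ⟨Cp, hCp, hbd⟩ := p.norm_mul_pow_le_of_lt_radius hrlt
  refine ⟨Cp, hCp, ?_, ?_⟩
  · intro n
    have h1 := hbd n
    have h2 : ‖p n‖ = ‖p.coeff n‖ := FormalMultilinearSeries.norm_apply_eq_norm_coef
    have h3 : ‖p n‖ * ((R+2)⁻¹) ^ n ≤ Cp := by exact_mod_cast h1
    have h4 : (0:ℝ) < (R+2) ^ n := by positivity
    rw [← h2]
    calc ‖p n‖ = ‖p n‖ * ((R+2)⁻¹) ^ n * (R+2) ^ n := by
          rw [mul_assoc, ← mul_pow, inv_mul_cancel₀ (by linarith), one_pow, mul_one]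
      _ ≤ Cp * (R+2) ^ n := mul_le_mul_of_nonneg_right h3 h4.le
  · intro z hz
    have hz0 : (z:ℂ) ≠ 0 := by
      intro h; rw [h] at hz; simp at hz; linarith
    have hzinv : ‖z⁻¹‖ < (R+1)⁻¹ := by
      rw [norm_inv]
      apply inv_strictAnti₀ (by linarith) hz
    have hmem : z⁻¹ ∈ Metric.eball (0:ℂ) r₁ := by
      rw [Metric.eball_coe, Metric.mem_ball, Complex.dist_eq, sub_zero]
      exact hzinv
    have hs := hP.hasSum hmem
    rw [zero_add] at hs
    have hHz : H z⁻¹ = z⁻¹ ^ m * g z := by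
      rw [hHG _ (inv_ne_zero hz0), hG]
      simp [inv_inv]
    rw [hHz] at hs
    have hs2 := hs.mul_left ((z:ℂ) ^ (m:ℤ))
    have hval : (z:ℂ) ^ (m:ℤ) * (z⁻¹ ^ m * g z) = g z := by
      rw [zpow_natCast, inv_pow, ← mul_assoc, mul_inv_cancel₀ (pow_ne_zero _ hz0), one_mul]
    rw [hval] at hs2
    refine hs2.congr_fun fun n => ?_
    rw [p.apply_eq_pow_smul_coeff, smul_eq_mul]
    rw [← zpow_natCast (z⁻¹) n, inv_zpow, ← zpow_neg]
    rw [← mul_assoc, ← zpow_add₀ hz0]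
    ring

end AUX

set_option maxHeartbeats 1000000

/-- For `d ≥ 1` and `g` holomorphic near `∞` with polynomial growth (i.e. meromorphic at
`∞`), there are `R' ≥ R`, `f` holomorphic near `∞` with polynomial growth, and constants
`c_{-1}, …, c_{d-2}` with `g(z) = f'(z) + d z^(d-1) f(z) + ∑_{j=-1}^{d-2} c_j z^j` for
`|z| > R'`; i.e. every differential `g(z)e^{z^d} dz` with `g` meromorphic at `∞` is
congruent, modulo exact differentials `d(f(z)e^{z^d})`, to a combination of
`z^j e^{z^d} dz`, `-1 ≤ j ≤ d-2`. -/
theorem merom_exp_decomposition (d : ℕ) (hd : 1 ≤ d) (R : ℝ) (hR : 0 < R) (g : ℂ → ℂ)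
    (hg : DifferentiableOn ℂ g {z : ℂ | R < ‖z‖})
    (hgrow : ∃ C > (0:ℝ), ∃ m : ℕ, ∀ z : ℂ, R < ‖z‖ →
      ‖(g z)‖ ≤ C * (‖z‖) ^ m) :
    ∃ R' ≥ R, ∃ f : ℂ → ℂ, ∃ c : ℤ → ℂ,
      DifferentiableOn ℂ f {z : ℂ | R' < ‖z‖} ∧
      (∃ C > (0:ℝ), ∃ m : ℕ, ∀ z : ℂ, R' < ‖z‖ →
        ‖(f z)‖ ≤ C * (‖z‖) ^ m) ∧
      ∀ z : ℂ, R' < ‖z‖ →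
        g z = deriv f z + (d : ℂ) * z ^ (d - 1) * f z
                + ∑ j ∈ Finset.Icc (-1 : ℤ) ((d : ℤ) - 2), c j * z ^ j := by
  classical
  obtain ⟨C, hC, m, hgrow⟩ := hgrow
  obtain ⟨β, A, hA, hβ, hβsum⟩ := aux_expand hR hg hC hgrow
  set ρ : ℝ := R + 2 with hρdef
  have hρ1 : (1:ℝ) < ρ := by simp [hρdef]; linarith
  have hρ0 : (0:ℝ) < ρ := by linarith
  set R' : ℝ := 2 * ρ with hR'def
  have hR'R : R' ≥ R := by simp [hR'def, hρdef]; linarith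
  have hR'1 : (1:ℝ) < R' := by simp [hR'def]; linarith
  refine ⟨R', hR'R, ?_⟩
  -- Laurent coefficients of g at infinity
  set b : ℤ → ℂ := fun n => if 0 ≤ n + m then β (n + m).toNat else 0 with hbdef
  have hb0 : ∀ n : ℤ, n + m < 0 → b n = 0 := by
    intro n hn; simp only [hbdef]; rw [if_neg (by omega)]
  have hbnat : ∀ t : ℕ, b ((t:ℤ) - m) = β t := by
    intro t; simp only [hbdef]
    rw [if_pos (by omega)]
    congr 1; omega
  set A₁ : ℝ := A * ρ ^ m with hA₁def
  have hA₁0 : 0 < A₁ := by positivity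
  have hbbd : ∀ N : ℕ, ‖b (N:ℤ)‖ ≤ A₁ * ρ ^ N := by
    intro N
    simp only [hbdef]
    rw [if_pos (by omega)]
    have h1 : ((N:ℤ) + m).toNat = N + m := by omega
    rw [h1]
    calc ‖β (N + m)‖ ≤ A * ρ ^ (N + m) := hβ _
      _ = A₁ * ρ ^ N := by rw [hA₁def, pow_add]; ring
  -- the T coefficients for positive indices
  set T : ℤ → ℕ → ℂ := fun k j => b (k + 1 + j * d) * (d:ℂ)^j /
      ((∏ i ∈ Finset.range (j+1), (k + i * d) : ℤ) : ℂ) with hTdef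
  have hprodpos : ∀ k : ℤ, 1 ≤ k → ∀ n : ℕ, (0:ℤ) < ∏ i ∈ Finset.range n, (k + i * d) := by
    intro k hk n
    apply Finset.prod_pos
    intro i _
    have : (0:ℤ) ≤ (i:ℤ) * d := by positivity
    omega
  have hprodge : ∀ k : ℤ, 1 ≤ k → ∀ j : ℕ,
      ((d:ℝ)^j * (j.factorial : ℝ)) ≤ ((∏ i ∈ Finset.range (j+1), (k + i * d) : ℤ) : ℝ) := by
    intro k hk j
    have h1 : ((∏ i ∈ Finset.range (j+1), (k + i * d) : ℤ) : ℝ)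
        = ∏ i ∈ Finset.range (j+1), ((k:ℝ) + i * d) := by push_cast; rfl
    rw [h1]
    have h2 : (∏ i ∈ Finset.range (j+1), ((k:ℝ) + i * d))
        = ((k:ℝ) + 0 * d) * ∏ i ∈ Finset.range j, ((k:ℝ) + (i+1) * d) := by
      rw [Finset.prod_range_succ']; push_cast; ring
    rw [h2]
    have hk1 : (1:ℝ) ≤ (k:ℝ) := by exact_mod_cast hk
    have h3 : (d:ℝ)^j * (j.factorial : ℝ) = ∏ i ∈ Finset.range j, (((i:ℝ)+1) * d) := by
      rw [Finset.prod_mul_distrib, Finset.prod_const, Finset.card_range,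
        ← Finset.prod_range_add_one_eq_factorial]
      push_cast
      ring
    rw [h3]
    have h4 : ∏ i ∈ Finset.range j, (((i:ℝ)+1) * d) ≤ ∏ i ∈ Finset.range j, ((k:ℝ) + (i+1) * d) := by
      apply Finset.prod_le_prod
      · intro i _; positivity
      · intro i _; nlinarith [hk1]
    calc ∏ i ∈ Finset.range j, (((i:ℝ)+1) * d) ≤ ∏ i ∈ Finset.range j, ((k:ℝ) + (i+1) * d) := h4
      _ ≤ ((k:ℝ) + 0 * d) * ∏ i ∈ Finset.range j, ((k:ℝ) + (i+1) * d) := by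
          apply le_mul_of_one_le_left
          · apply Finset.prod_nonneg; intro i _; nlinarith [hk1]
          · simpa using hk1
  have hTbd : ∀ k : ℤ, 1 ≤ k → ∀ j : ℕ,
      ‖T k j‖ ≤ (A₁ * ρ ^ (k.toNat + 1)) * ((ρ^d)^j / j.factorial) := by
    intro k hk j
    have hnn : k + 1 + j * d = ((k.toNat + 1 + j * d : ℕ) : ℤ) := by push_cast; omega
    have hfac0 : (0:ℝ) < (j.factorial : ℝ) := by exact_mod_cast j.factorial_pos
    have hd0 : (0:ℝ) < (d:ℝ) := by exact_mod_cast hd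
    rw [hTdef]
    simp only []
    rw [norm_div, norm_mul, norm_pow]
    have hb1 : ‖b (k + 1 + j * d)‖ ≤ A₁ * ρ ^ (k.toNat + 1 + j * d) := by
      rw [hnn]; exact hbbd _
    have hdn : ‖(d:ℂ)‖ = (d:ℝ) := by
      rw [Complex.norm_natCast]
    have hprodnorm : ((d:ℝ)^j * (j.factorial : ℝ)) ≤ ‖((∏ i ∈ Finset.range (j+1), (k + i * d) : ℤ) : ℂ)‖ := by
      rw [Complex.norm_intCast]
      calc ((d:ℝ)^j * (j.factorial : ℝ)) ≤ ((∏ i ∈ Finset.range (j+1), (k + i * d) : ℤ) : ℝ) :=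
            hprodge k hk j
        _ ≤ |((∏ i ∈ Finset.range (j+1), (k + i * d) : ℤ) : ℝ)| := le_abs_self _
    have hdenpos : (0:ℝ) < (d:ℝ)^j * (j.factorial : ℝ) := by positivity
    have hnormpos : (0:ℝ) < ‖((∏ i ∈ Finset.range (j+1), (k + i * d) : ℤ) : ℂ)‖ :=
      lt_of_lt_of_le hdenpos hprodnorm
    rw [hdn]
    calc ‖b (k + 1 + j * d)‖ * (d:ℝ)^j / ‖((∏ i ∈ Finset.range (j+1), (k + i * d) : ℤ) : ℂ)‖
        ≤ (A₁ * ρ ^ (k.toNat + 1 + j * d)) * (d:ℝ)^j / ((d:ℝ)^j * (j.factorial:ℝ)) := by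
          apply div_le_div₀ (by positivity) _ hdenpos hprodnorm
          exact mul_le_mul_of_nonneg_right hb1 (by positivity)
      _ = (A₁ * ρ ^ (k.toNat + 1)) * ((ρ^d)^j / j.factorial) := by
          rw [pow_add, ← pow_mul]
          field_simp
          ring
  have hgeomfac : Summable (fun j : ℕ => (ρ^d)^j / (j.factorial : ℝ)) := by
    have := Real.summable_pow_div_factorial (ρ^d)
    exact this
  have hTsum : ∀ k : ℤ, 1 ≤ k → Summable (fun j => T k j) := by
    intro k hk
    apply Summable.of_norm_bounded (hgeomfac.mul_left (A₁ * ρ ^ (k.toNat + 1))) (hTbd k hk)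
  set apos : ℤ → ℂ := fun k => -∑' j, T k j with haposdef
  set E₀ : ℝ := ∑' j : ℕ, (ρ^d)^j / (j.factorial : ℝ) with hE₀def
  set A₂ : ℝ := A₁ * ρ * E₀ with hA₂def
  have hE₀0 : 0 ≤ E₀ := tsum_nonneg (fun j => by positivity)
  have hA₂0 : 0 ≤ A₂ := by positivity
  have haposbd : ∀ k : ℤ, 1 ≤ k → ‖apos k‖ ≤ A₂ * ρ ^ k.toNat := by
    intro k hk
    rw [haposdef]
    simp only [norm_neg]
    calc ‖∑' j, T k j‖ ≤ ∑' j, (A₁ * ρ ^ (k.toNat + 1)) * ((ρ^d)^j / j.factorial) :=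
          tsum_of_norm_bounded ((hgeomfac.mul_left _).hasSum) (hTbd k hk)
      _ = (A₁ * ρ ^ (k.toNat + 1)) * E₀ := by rw [tsum_mul_left, hE₀def]
      _ = A₂ * ρ ^ k.toNat := by rw [hA₂def, pow_succ]; ring
  have hdC : (d:ℂ) ≠ 0 := by
    simp only [ne_eq, Nat.cast_eq_zero]; omega
  have hrec1 : ∀ k : ℤ, 1 ≤ k → (d:ℂ) * apos (k + d) - (k:ℂ) * apos k = b (k + 1) := by
    intro k hk
    have hkd : (1:ℤ) ≤ k + d := by omega
    have hkC : ((k:ℂ)) ≠ 0 := by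
      simp only [ne_eq, Int.cast_eq_zero]; omega
    have hs1 : Summable (fun j => T k j) := hTsum k hk
    have hs2 : Summable (fun j => T (k + d) j) := hTsum _ hkd
    have hkey : ∀ j : ℕ, (k:ℂ) * T k (j+1) = (d:ℂ) * T (k + d) j := by
      intro j
      have hPne : ∀ n : ℕ, ((∏ i ∈ Finset.range n, (k + i * d) : ℤ) : ℂ) ≠ 0 := by
        intro n
        simp only [ne_eq, Int.cast_eq_zero]
        exact ne_of_gt (hprodpos k hk n)
      have hPne2 : ((∏ i ∈ Finset.range (j+1), ((k + d) + i * d) : ℤ) : ℂ) ≠ 0 := by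
        simp only [ne_eq, Int.cast_eq_zero]
        exact ne_of_gt (hprodpos (k+d) hkd (j+1))
      have hsplit : (∏ i ∈ Finset.range (j+2), (k + i * d) : ℤ)
          = (∏ i ∈ Finset.range (j+1), ((k + d) + i * d)) * k := by
        rw [Finset.prod_range_succ']
        congr 1
        · apply Finset.prod_congr rfl
          intro i _
          push_cast
          ring
        · simp
      have hidx : k + 1 + ((j:ℤ)+1) * d = (k + d) + 1 + j * d := by ring
      have hidx2 : k + 1 + ((j+1:ℕ):ℤ) * d = (k + d) + 1 + j * d := by push_cast; ring
      rw [hTdef]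
      simp only []
      obtain ⟨Q, hQ⟩ : ∃ Q : ℂ, ((∏ i ∈ Finset.range (j+1), ((k + d) + i * d) : ℤ) : ℂ) = Q :=
        ⟨_, rfl⟩
      rw [hQ] at hPne2
      rw [hidx2, hsplit, Int.cast_mul, hQ, pow_succ]
      field_simp
    have hT0 : (k:ℂ) * T k 0 = b (k + 1) := by
      rw [hTdef]
      simp only [zero_add, Finset.prod_range_one, pow_zero, Nat.cast_zero, zero_mul, add_zero, mul_one]
      field_simp
    have h1 : ∑' j, (k:ℂ) * T k j = (k:ℂ) * T k 0 + ∑' j, (k:ℂ) * T k (j+1) :=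
      Summable.tsum_eq_zero_add (hs1.mul_left _)
    have h2 : ∑' j, (k:ℂ) * T k (j+1) = ∑' j, (d:ℂ) * T (k+d) j := tsum_congr hkey
    have h3 : ∑' j, (k:ℂ) * T k j = (k:ℂ) * ∑' j, T k j := tsum_mul_left
    have h4 : ∑' j, (d:ℂ) * T (k+d) j = (d:ℂ) * ∑' j, T (k+d) j := tsum_mul_left
    have h5 : (k:ℂ) * ∑' j, T k j = b (k+1) + (d:ℂ) * ∑' j, T (k+d) j := by
      rw [← h3, h1, h2, h4, hT0]
    rw [haposdef]
    simp only []
    rw [mul_neg, mul_neg, h5]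
    ring
  set aneg : ℤ → ℂ := fun κ => ∑ j ∈ Finset.range (m+1),
      b (κ + 1 - (j+1) * d) * ((∏ i ∈ Finset.range j, (κ - (i+1) * d) : ℤ) : ℂ) / (d:ℂ)^(j+1)
    with hanegdef
  have hanegzero : ∀ κ : ℤ, κ + m < (d:ℤ) - 1 → aneg κ = 0 := by
    intro κ hκ
    rw [hanegdef]
    apply Finset.sum_eq_zero
    intro j _
    have hidx : κ + 1 - (j+1) * d + m < 0 := by
      have h1 : (1:ℤ) ≤ d := by exact_mod_cast hd
      have h2 : (0:ℤ) ≤ (j:ℤ) * d := by positivity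
      push_cast
      nlinarith
    rw [hb0 _ hidx, zero_mul, zero_div]
  have hrec2 : ∀ κ : ℤ, κ ≤ 0 → (d:ℂ) * aneg κ - ((κ:ℂ) - d) * aneg (κ - d) = b (κ - d + 1) := by
    intro κ hκ
    set F : ℕ → ℂ := fun j => b (κ + 1 - (j+1) * d) *
        ((∏ i ∈ Finset.range j, (κ - (i+1) * d) : ℤ) : ℂ) / (d:ℂ)^j with hFdef
    have h1 : (d:ℂ) * aneg κ = ∑ j ∈ Finset.range (m+1), F j := by
      rw [hanegdef, Finset.mul_sum]
      apply Finset.sum_congr rfl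
      intro j _
      rw [hFdef]
      simp only []
      rw [pow_succ]
      field_simp
    have h2 : ((κ:ℂ) - d) * aneg (κ - d) = ∑ j ∈ Finset.range (m+1), F (j+1) := by
      rw [hanegdef, Finset.mul_sum]
      apply Finset.sum_congr rfl
      intro j _
      rw [hFdef]
      simp only []
      have hidx3 : κ - (d:ℤ) + 1 - ((j:ℤ)+1) * d = κ + 1 - (((j+1:ℕ):ℤ)+1) * d := by
        push_cast; ring
      have hprod : (∏ i ∈ Finset.range (j+1), (κ - (i+1) * d) : ℤ)
          = (κ - d) * ∏ i ∈ Finset.range j, ((κ - d) - (i+1) * d) := by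
        rw [Finset.prod_range_succ', mul_comm]
        congr 1
        · push_cast; ring
        · apply Finset.prod_congr rfl
          intro i _
          push_cast
          ring
      rw [hidx3, hprod, Int.cast_mul, Int.cast_sub, Int.cast_natCast]
      ring
    have hF0 : F 0 = b (κ - d + 1) := by
      rw [hFdef]
      simp only [Finset.range_zero, Finset.prod_empty, pow_zero, Int.cast_one, mul_one, div_one]
      congr 1
      push_cast
      ring
    have hFtop : F (m+1) = 0 := by
      rw [hFdef]
      simp only []
      have hidx : κ + 1 - ((m+1:ℕ)+1) * d + m < 0 := by
        have h1 : (1:ℤ) ≤ d := by exact_mod_cast hd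
        push_cast
        nlinarith
      rw [hb0 _ hidx, zero_mul, zero_div]
    have h3 : ∑ j ∈ Finset.range (m+2), F j = ∑ j ∈ Finset.range (m+1), F (j+1) + F 0 :=
      Finset.sum_range_succ' F (m+1)
    have h4 : ∑ j ∈ Finset.range (m+2), F j = ∑ j ∈ Finset.range (m+1), F j + F (m+1) :=
      Finset.sum_range_succ F (m+1)
    rw [h1, h2]
    rw [← hF0]
    have heq := h3.symm.trans h4
    rw [hFtop, add_zero] at heq
    linear_combination -heq
  set a : ℤ → ℂ := fun n => if 1 ≤ n then apos n else aneg n with hadef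
  have hR'0 : (0:ℝ) < R' := by linarith
  set s : Set ℂ := {z : ℂ | R' < ‖z‖} with hsdef
  have hsopen : IsOpen s := isOpen_lt continuous_const continuous_norm
  have hsconn : IsPreconnected s := aux_preconn hR'0.le
  -- tail coefficients
  set aa : ℕ → ℂ := fun k => apos ((k:ℤ)+1) with haadef
  have haabd : ∀ k : ℕ, ‖aa k‖ ≤ A₂ * ρ^(k+1) := by
    intro k
    have h1 := haposbd ((k:ℤ)+1) (by omega)
    have h2 : ((k:ℤ)+1).toNat = k+1 := by omega
    rw [h2] at h1
    exact h1
  have hzpow_bd : ∀ z : ℂ, R' ≤ ‖z‖ → ∀ k : ℕ,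
      ‖(z:ℂ) ^ (-((k:ℤ)+1))‖ ≤ (R'^(k+1))⁻¹ := by
    intro z hz k
    rw [norm_zpow]
    have h1 : (-((k:ℤ)+1)) = -((k+1:ℕ):ℤ) := by push_cast; ring
    rw [h1, zpow_neg, zpow_natCast]
    apply inv_anti₀ (by positivity)
    apply pow_le_pow_left₀ hR'0.le
    exact hz
  have hpow_eq : ∀ k : ℕ, A₂ * ρ^(k+1) * (R'^(k+1))⁻¹ = A₂ * (2:ℝ)⁻¹^(k+1) := by
    intro k
    rw [hR'def, mul_pow]
    have hρne : ρ ≠ 0 := ne_of_gt hρ0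
    field_simp
    rw [mul_assoc, ← mul_pow]; norm_num
  have hterm_bd : ∀ z : ℂ, R' ≤ ‖z‖ → ∀ k : ℕ,
      ‖aa k * z ^ (-((k:ℤ)+1))‖ ≤ A₂ * (2:ℝ)⁻¹^(k+1) := by
    intro z hz k
    rw [norm_mul, ← hpow_eq k]
    apply mul_le_mul (haabd k) (hzpow_bd z hz k) (norm_nonneg _) (by positivity)
  have hgeo : Summable (fun k : ℕ => A₂ * (2:ℝ)⁻¹^(k+1)) := by
    apply Summable.mul_left
    have h := summable_geometric_of_lt_one (by norm_num : (0:ℝ) ≤ 2⁻¹) (by norm_num : (2:ℝ)⁻¹ < 1)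
    exact (summable_nat_add_iff 1).mpr h
  have htail_sum : ∀ z : ℂ, R' ≤ ‖z‖ →
      Summable (fun k : ℕ => aa k * z ^ (-((k:ℤ)+1))) := by
    intro z hz
    exact Summable.of_norm_bounded hgeo (hterm_bd z hz)
  -- the function f
  set f : ℂ → ℂ := fun z => (∑ t ∈ Finset.range (m+1), a (-(t:ℤ)) * z^t)
      + ∑' k : ℕ, aa k * z ^ (-((k:ℤ)+1)) with hfdef
  -- derivative data
  set u : ℕ → ℝ := fun k => (A₂/ρ) * (((k:ℝ)+1) * (2:ℝ)⁻¹^(k+2)) with hudef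
  have husum : Summable u := by
    apply Summable.mul_left
    have h1 : Summable (fun n : ℕ => (n:ℝ) * (2:ℝ)⁻¹^n) := by
      have := summable_pow_mul_geometric_of_norm_lt_one 1 (r := (2:ℝ)⁻¹) (by norm_num)
      simpa using this
    have h2 : Summable (fun k : ℕ => ((k:ℝ)+1) * (2:ℝ)⁻¹^(k+1)) := by
      have := (summable_nat_add_iff 1).mpr h1
      simpa [Nat.cast_add] using this
    have h3 := h2.mul_left (2:ℝ)⁻¹
    apply h3.congr
    intro k
    rw [pow_succ]
    ring
  have hgk' : ∀ k : ℕ, ∀ y ∈ s, ‖aa k * ((-((k:ℤ)+1) : ℤ) * y ^ (-((k:ℤ)+1)-1))‖ ≤ u k := by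
    intro k y hy
    have hyabs : R' < ‖y‖ := hy
    have hy1 : (1:ℝ) < ‖y‖ := lt_trans hR'1 hyabs
    have hy0 : (y:ℂ) ≠ 0 := by
      intro h; rw [h] at hy1; simp at hy1; linarith
    rw [norm_mul, norm_mul]
    have e1 : ‖((-((k:ℤ)+1) : ℤ) : ℂ)‖ = (k:ℝ)+1 := by
      push_cast
      rw [norm_neg]
      rw [show ((k:ℂ)+1) = (((k+1:ℕ):ℝ):ℂ) by push_cast; ring]
      rw [Complex.norm_real, Real.norm_natCast]
      push_cast; ring
    have e2 : ‖y ^ (-((k:ℤ)+1)-1)‖ ≤ (R'^(k+2))⁻¹ := by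
      rw [norm_zpow]
      have h1 : (-((k:ℤ)+1)-1) = -((k+2:ℕ):ℤ) := by push_cast; ring
      rw [h1, zpow_neg, zpow_natCast]
      apply inv_anti₀ (by positivity)
      apply pow_le_pow_left₀ hR'0.le
      linarith
    calc ‖aa k‖ * (‖((-((k:ℤ)+1) : ℤ) : ℂ)‖ * ‖y ^ (-((k:ℤ)+1)-1)‖)
        ≤ (A₂ * ρ^(k+1)) * (((k:ℝ)+1) * (R'^(k+2))⁻¹) := by
          apply mul_le_mul (haabd k) _ (by positivity) (by positivity)
          rw [e1]
          apply mul_le_mul_of_nonneg_left e2 (by positivity)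
      _ = u k := by
          rw [hudef]
          simp only []
          rw [hR'def, mul_pow]
          have hρne : ρ ≠ 0 := ne_of_gt hρ0
          rw [pow_succ ρ (k+1)]
          field_simp
          rw [mul_assoc, ← mul_pow]; norm_num
  have hx₀ : ((R'+1 : ℝ):ℂ) ∈ s := by
    show R' < ‖((R'+1:ℝ):ℂ)‖
    rw [Complex.norm_real, Real.norm_eq_abs, abs_of_pos (by linarith)]
    linarith
  have hx₀abs : R' ≤ ‖((R'+1 : ℝ):ℂ)‖ := le_of_lt hx₀
  have hderiv_tail : ∀ z ∈ s, HasDerivAt (fun y => ∑' k : ℕ, aa k * y ^ (-((k:ℤ)+1)))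
      (∑' k : ℕ, aa k * ((-((k:ℤ)+1) : ℤ) * z ^ (-((k:ℤ)+1)-1))) z := by
    intro z hz
    refine hasDerivAt_tsum_of_isPreconnected husum hsopen hsconn ?_ hgk' hx₀ ?_ hz
    · intro k y hy
      have hy0 : (y:ℂ) ≠ 0 := by
        have : R' < ‖y‖ := hy
        intro h; rw [h] at this; simp at this; linarith
      exact (hasDerivAt_zpow (-((k:ℤ)+1)) y (Or.inl hy0)).const_mul (aa k)
    · exact htail_sum _ hx₀abs
  have hderiv_f : ∀ z ∈ s, HasDerivAt f
      ((∑ t ∈ Finset.range (m+1), a (-(t:ℤ)) * ((t:ℂ) * z^(t-1)))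
        + ∑' k : ℕ, aa k * ((-((k:ℤ)+1) : ℤ) * z ^ (-((k:ℤ)+1)-1))) z := by
    intro z hz
    apply HasDerivAt.add
    · apply HasDerivAt.fun_sum
      intro t _
      exact (hasDerivAt_pow t z).const_mul _
    · exact hderiv_tail z hz
  have hdiff : DifferentiableOn ℂ f s :=
    fun z hz => ((hderiv_f z hz).differentiableAt).differentiableWithinAt
  -- growth bound
  set K : ℝ := (∑ t ∈ Finset.range (m+1), ‖a (-(t:ℤ))‖) + 2*A₂ + 1 with hKdef
  have hK0 : 0 < K := by
    have h1 : 0 ≤ ∑ t ∈ Finset.range (m+1), ‖a (-(t:ℤ))‖ :=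
      Finset.sum_nonneg fun t _ => norm_nonneg _
    have := hA₂0
    rw [hKdef]
    linarith
  have hgrowth : ∀ z : ℂ, R' < ‖z‖ → ‖(f z)‖ ≤ K * (‖z‖)^m := by
    intro z hz
    have hz1 : (1:ℝ) ≤ ‖z‖ := le_of_lt (lt_trans hR'1 hz)
    have hzm : (1:ℝ) ≤ (‖z‖)^m := by
      calc (1:ℝ) = 1^m := (one_pow m).symm
        _ ≤ (‖z‖)^m := pow_le_pow_left₀ (by norm_num) hz1 m
    rw [hfdef]
    simp only []
    have hpoly : ‖∑ t ∈ Finset.range (m+1), a (-(t:ℤ)) * z^t‖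
        ≤ (∑ t ∈ Finset.range (m+1), ‖a (-(t:ℤ))‖) * (‖z‖)^m := by
      calc ‖∑ t ∈ Finset.range (m+1), a (-(t:ℤ)) * z^t‖
          ≤ ∑ t ∈ Finset.range (m+1), ‖a (-(t:ℤ)) * z^t‖ := norm_sum_le _ _
        _ ≤ ∑ t ∈ Finset.range (m+1), ‖a (-(t:ℤ))‖ * (‖z‖)^m := by
            apply Finset.sum_le_sum
            intro t ht
            rw [norm_mul, norm_pow]
            apply mul_le_mul_of_nonneg_left _ (norm_nonneg _)
            apply pow_le_pow_right₀ hz1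
            simp only [Finset.mem_range] at ht
            omega
        _ = (∑ t ∈ Finset.range (m+1), ‖a (-(t:ℤ))‖) * (‖z‖)^m := by
            rw [Finset.sum_mul]
    have htail : ‖∑' k : ℕ, aa k * z ^ (-((k:ℤ)+1))‖ ≤ 2*A₂ := by
      calc ‖∑' k : ℕ, aa k * z ^ (-((k:ℤ)+1))‖ ≤ ∑' k : ℕ, A₂ * (2:ℝ)⁻¹^(k+1) :=
            tsum_of_norm_bounded hgeo.hasSum (hterm_bd z (le_of_lt hz))
        _ ≤ ∑' k : ℕ, A₂ * (2:ℝ)⁻¹^k := by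
            refine Summable.tsum_le_tsum ?_ hgeo ?_
            · intro k
              apply mul_le_mul_of_nonneg_left _ hA₂0
              apply pow_le_pow_of_le_one (by norm_num) (by norm_num)
              omega
            · apply Summable.mul_left
              exact summable_geometric_of_lt_one (by norm_num) (by norm_num)
        _ = 2*A₂ := by
            rw [tsum_mul_left, tsum_geometric_of_lt_one (by norm_num) (by norm_num)]
            norm_num
            ring
    calc ‖(∑ t ∈ Finset.range (m+1), a (-(t:ℤ)) * z^t) + ∑' k : ℕ, aa k * z ^ (-((k:ℤ)+1))‖
        ≤ ‖∑ t ∈ Finset.range (m+1), a (-(t:ℤ)) * z^t‖ + ‖∑' k : ℕ, aa k * z ^ (-((k:ℤ)+1))‖ :=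
          norm_add_le _ _
      _ ≤ (∑ t ∈ Finset.range (m+1), ‖a (-(t:ℤ))‖) * (‖z‖)^m + 2*A₂ :=
          add_le_add hpoly htail
      _ ≤ (∑ t ∈ Finset.range (m+1), ‖a (-(t:ℤ))‖) * (‖z‖)^m
            + (2*A₂ + 1) * (‖z‖)^m := by
          have h2 : 2*A₂ ≤ (2*A₂+1) * (‖z‖)^m := by nlinarith
          linarith
      _ = K * (‖z‖)^m := by rw [hKdef]; ring
  set E : ℤ → ℂ := fun n => (d:ℂ) * a (n + ((d:ℤ)-1)) - ((n:ℂ) - 1) * a (n - 1) with hEdef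
  set c : ℤ → ℂ := fun j => b (-j) - E (-j) with hcdef
  refine ⟨f, c, hdiff, ⟨K, hK0, m, hgrowth⟩, ?_⟩
  intro z hz
  have hzmem : z ∈ s := hz
  have hdz : (1:ℤ) ≤ (d:ℤ) := by exact_mod_cast hd
  have habs1 : R + 1 < ‖z‖ := by
    have : R + 1 < R' := by rw [hR'def, hρdef]; linarith
    linarith
  have hz1 : (1:ℝ) < ‖z‖ := lt_trans hR'1 hz
  have hz0 : z ≠ 0 := by
    intro h; rw [h] at hz1; simp at hz1; linarith
  have hzR' : R' ≤ ‖z‖ := le_of_lt hz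
  -- Step A : Laurent expansion of g
  have hU : HasSum (fun n : ℤ => b n * z ^ (-n)) (g z) := by
    have h0 := hβsum z habs1
    have hinj : Function.Injective (fun t : ℕ => (t:ℤ) - m) := by
      intro x y h
      simp only at h
      omega
    have hsupp : ∀ n : ℤ, n ∉ Set.range (fun t : ℕ => (t:ℤ) - m) → b n * z ^ (-n) = 0 := by
      intro n hn
      have hneg : n + m < 0 := by
        by_contra hc
        push_neg at hc
        refine hn ⟨(n + m).toNat, ?_⟩
        show (((n + m).toNat : ℤ)) - m = n
        omega
      rw [hb0 n hneg, zero_mul]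
    rw [← Function.Injective.hasSum_iff hinj hsupp]
    apply h0.congr_fun
    intro t
    simp only [Function.comp_apply]
    rw [hbnat t]
    congr 1
    ring_nf
  -- Step B/C : Laurent expansion of f
  set V : ℤ → ℂ := fun n => a n * z ^ (-n) with hVdef
  have htailsummable := htail_sum z hzR'
  have hVpos : HasSum (fun n : ℕ => V (n:ℤ))
      ((∑' k : ℕ, aa k * z ^ (-((k:ℤ)+1))) + ∑ i ∈ Finset.range 1, V (i:ℤ)) := by
    apply (hasSum_nat_add_iff 1).mp
    apply htailsummable.hasSum.congr_fun
    intro k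
    rw [hVdef]
    simp only []
    have h1 : ((k+1:ℕ):ℤ) = (k:ℤ)+1 := by push_cast; ring
    rw [h1, hadef]
    simp only []
    rw [if_pos (by omega), haadef]
  have hVneg : HasSum (fun t : ℕ => V (-((t:ℤ)+1)))
      (∑ t ∈ Finset.range m, V (-((t:ℤ)+1))) := by
    apply hasSum_sum_of_ne_finset_zero
    intro t ht
    simp only [Finset.mem_range, not_lt] at ht
    have haz : a (-((t:ℤ)+1)) = 0 := by
      rw [hadef]
      simp only []
      rw [if_neg (by omega)]
      apply hanegzero
      omega
    rw [hVdef]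
    simp only []
    rw [haz, zero_mul]
  have hVsum : HasSum V ((((∑' k : ℕ, aa k * z ^ (-((k:ℤ)+1))) + ∑ i ∈ Finset.range 1, V (i:ℤ)))
      + ∑ t ∈ Finset.range m, V (-((t:ℤ)+1))) := hVpos.of_nat_of_neg_add_one hVneg
  have hfz : f z = (((∑' k : ℕ, aa k * z ^ (-((k:ℤ)+1))) + ∑ i ∈ Finset.range 1, V (i:ℤ)))
      + ∑ t ∈ Finset.range m, V (-((t:ℤ)+1)) := by
    rw [hfdef]
    simp only []
    have hterm : ∀ t : ℕ, V (-((t:ℤ)+1)) = a (-((t+1:ℕ):ℤ)) * z^(t+1) := by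
      intro t
      rw [hVdef]
      simp only []
      rw [show (-((t:ℤ)+1)) = -((t+1:ℕ):ℤ) by push_cast; ring, neg_neg, zpow_natCast]
    have hV0 : V 0 = a (-(0:ℤ)) * z^0 := by
      rw [hVdef]; simp only []; norm_num
    have hpoly : ∑ t ∈ Finset.range (m+1), a (-(t:ℤ)) * z^t
        = V 0 + ∑ t ∈ Finset.range m, V (-((t:ℤ)+1)) := by
      rw [Finset.sum_range_succ' (fun t => a (-(t:ℤ)) * z^t) m]
      simp only [hterm, hV0]
      exact add_comm _ _
    rw [hpoly]
    have h3 : ∑ i ∈ Finset.range 1, V (i:ℤ) = V 0 := by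
      rw [Finset.sum_range_one]
      norm_num
    rw [h3]
    ring
  have hV : HasSum V (f z) := by rw [hfz]; exact hVsum
  -- Step D : Laurent expansion of deriv f
  set W : ℤ → ℂ := fun n => -(n:ℂ) * a n * z ^ (-n-1) with hWdef
  have hdtail_summable : Summable (fun k : ℕ => aa k * (((-((k:ℤ)+1)) : ℤ) * z ^ (-((k:ℤ)+1)-1))) := by
    apply Summable.of_norm_bounded husum
    intro k
    exact hgk' k z hzmem
  have hWpos : HasSum (fun n : ℕ => W (n:ℤ))
      ((∑' k : ℕ, aa k * (((-((k:ℤ)+1)) : ℤ) * z ^ (-((k:ℤ)+1)-1))) + ∑ i ∈ Finset.range 1, W (i:ℤ)) := by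
    apply (hasSum_nat_add_iff 1).mp
    apply hdtail_summable.hasSum.congr_fun
    intro k
    rw [hWdef]
    simp only []
    have h1 : ((k+1:ℕ):ℤ) = (k:ℤ)+1 := by push_cast; ring
    rw [h1]
    have h2 : a ((k:ℤ)+1) = aa k := by
      rw [hadef]; simp only []; rw [if_pos (by omega), haadef]
    rw [h2]
    push_cast
    ring
  have hWneg : HasSum (fun t : ℕ => W (-((t:ℤ)+1)))
      (∑ t ∈ Finset.range m, W (-((t:ℤ)+1))) := by
    apply hasSum_sum_of_ne_finset_zero
    intro t ht
    simp only [Finset.mem_range, not_lt] at ht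
    have haz : a (-((t:ℤ)+1)) = 0 := by
      rw [hadef]
      simp only []
      rw [if_neg (by omega)]
      apply hanegzero
      omega
    rw [hWdef]
    simp only []
    rw [haz, mul_zero, zero_mul]
  have hWsum : HasSum W (((∑' k : ℕ, aa k * (((-((k:ℤ)+1)) : ℤ) * z ^ (-((k:ℤ)+1)-1)))
      + ∑ i ∈ Finset.range 1, W (i:ℤ)) + ∑ t ∈ Finset.range m, W (-((t:ℤ)+1))) :=
    hWpos.of_nat_of_neg_add_one hWneg
  have hderfz : deriv f z = (((∑' k : ℕ, aa k * (((-((k:ℤ)+1)) : ℤ) * z ^ (-((k:ℤ)+1)-1)))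
      + ∑ i ∈ Finset.range 1, W (i:ℤ)) + ∑ t ∈ Finset.range m, W (-((t:ℤ)+1))) := by
    rw [(hderiv_f z hzmem).deriv]
    have hW0 : ∑ i ∈ Finset.range 1, W (i:ℤ) = 0 := by
      rw [Finset.sum_range_one, hWdef]
      simp
    have hPd : ∑ t ∈ Finset.range (m+1), a (-(t:ℤ)) * ((t:ℂ) * z^(t-1))
        = ∑ t ∈ Finset.range m, W (-((t:ℤ)+1)) := by
      rw [Finset.sum_range_succ' (fun t => a (-(t:ℤ)) * ((t:ℂ) * z^(t-1))) m]
      have h1 : ∀ t : ℕ, a (-((t+1:ℕ):ℤ)) * (((t+1:ℕ):ℂ) * z^((t+1)-1)) = W (-((t:ℤ)+1)) := by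
        intro t
        rw [hWdef]
        simp only []
        have e1 : -((t+1:ℕ):ℤ) = -((t:ℤ)+1) := by push_cast; ring
        have e2 : z^((t+1)-1) = z ^ (-(-((t:ℤ)+1))-1) := by
          have : (-(-((t:ℤ)+1))-1) = ((t:ℕ):ℤ) := by push_cast; ring
          rw [this, zpow_natCast]
          norm_num
        rw [e1, e2]
        push_cast
        ring
      rw [Finset.sum_congr rfl (fun t _ => h1 t)]
      simp
    rw [hPd, hW0]
    ring
  have hW : HasSum W (deriv f z) := by rw [hderfz]; exact hWsum
  -- Step E : combined expansion of deriv f + d z^(d-1) f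
  have hY : HasSum (fun n : ℤ => (d:ℂ) * a (n + ((d:ℤ)-1)) * z ^ (-n))
      ((d:ℂ) * z ^ ((d:ℤ)-1) * f z) := by
    have h1 := hV.mul_left ((d:ℂ) * z ^ ((d:ℤ)-1))
    have h2 := ((Equiv.addRight ((d:ℤ)-1)).hasSum_iff).mpr h1
    apply h2.congr_fun
    intro n
    simp only [Function.comp_apply, Equiv.coe_addRight, hVdef]
    have hzz : z ^ ((d:ℤ)-1) * z ^ (-(n + ((d:ℤ)-1))) = z ^ (-n) := by
      rw [← zpow_add₀ hz0]
      congr 1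
      ring
    rw [← hzz]
    ring
  have hWshift : HasSum (fun n : ℤ => -((n:ℂ)-1) * a (n-1) * z ^ (-n)) (deriv f z) := by
    have h2 := ((Equiv.subRight (1:ℤ)).hasSum_iff).mpr hW
    apply h2.congr_fun
    intro n
    simp only [Function.comp_apply, Equiv.subRight_apply, hWdef]
    have e1 : ((n-1:ℤ):ℂ) = (n:ℂ)-1 := by push_cast; ring
    have e2 : (-(n-1)-1 : ℤ) = -n := by ring
    rw [e1, e2]
  have hE : HasSum (fun n : ℤ => E n * z ^ (-n))
      (deriv f z + (d:ℂ) * z ^ ((d:ℤ)-1) * f z) := by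
    apply (hWshift.add hY).congr_fun
    intro n
    rw [hEdef]
    simp only []
    ring
  -- Step F : compare
  have hdiffsum : HasSum (fun n : ℤ => b n * z ^ (-n) - E n * z ^ (-n))
      (g z - (deriv f z + (d:ℂ) * z ^ ((d:ℤ)-1) * f z)) := hU.sub hE
  have hvanish : ∀ n : ℤ, n ∉ Finset.Icc (2-(d:ℤ)) 1 → b n * z ^ (-n) - E n * z ^ (-n) = 0 := by
    intro n hn
    rw [Finset.mem_Icc] at hn
    push_neg at hn
    have hEb : E n = b n := by
      rcases lt_or_ge 1 n with hcase | hcase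
      · -- n ≥ 2
        have hk1 : (1:ℤ) ≤ n - 1 := by omega
        have h1 := hrec1 (n-1) hk1
        have ha1 : a (n + ((d:ℤ)-1)) = apos ((n-1) + d) := by
          rw [hadef]
          simp only []
          rw [if_pos (by omega)]
          congr 1
          ring
        have ha2 : a (n-1) = apos (n-1) := by
          rw [hadef]; simp only []; rw [if_pos (by omega)]
        rw [hEdef]
        simp only []
        rw [ha1, ha2]
        have e1 : ((n-1:ℤ):ℂ) = (n:ℂ)-1 := by push_cast; ring
        rw [e1] at h1
        have e2 : (n-1) + 1 = n := by ring
        rw [e2] at h1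
        exact h1
      · -- n ≤ 1 - d + something : outside window means n < 2 - d
        have hnd : n < 2 - (d:ℤ) := by
          by_contra hcon
          push_neg at hcon
          have := hn hcon
          omega
        have hκ : n + ((d:ℤ)-1) ≤ 0 := by omega
        have h1 := hrec2 (n + ((d:ℤ)-1)) hκ
        have ha1 : a (n + ((d:ℤ)-1)) = aneg (n + ((d:ℤ)-1)) := by
          rw [hadef]; simp only []; rw [if_neg (by omega)]
        have ha2 : a (n-1) = aneg (n + ((d:ℤ)-1) - d) := by
          rw [hadef]
          simp only []
          rw [if_neg (by omega)]
          congr 1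
          ring
        rw [hEdef]
        simp only []
        rw [ha1, ha2]
        have e1 : ((n + ((d:ℤ)-1) : ℤ):ℂ) - (d:ℂ) = (n:ℂ)-1 := by push_cast; ring
        rw [e1] at h1
        have e2 : n + ((d:ℤ)-1) - d + 1 = n := by ring
        rw [e2] at h1
        exact h1
    rw [hEb]
    ring
  have hfin : HasSum (fun n : ℤ => b n * z ^ (-n) - E n * z ^ (-n))
      (∑ n ∈ Finset.Icc (2-(d:ℤ)) 1, (b n * z ^ (-n) - E n * z ^ (-n))) :=
    hasSum_sum_of_ne_finset_zero hvanish
  have heq : g z - (deriv f z + (d:ℂ) * z ^ ((d:ℤ)-1) * f z)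
      = ∑ n ∈ Finset.Icc (2-(d:ℤ)) 1, (b n * z ^ (-n) - E n * z ^ (-n)) :=
    hdiffsum.unique hfin
  have hsumc : ∑ n ∈ Finset.Icc (2-(d:ℤ)) 1, (b n * z ^ (-n) - E n * z ^ (-n))
      = ∑ j ∈ Finset.Icc (-1:ℤ) ((d:ℤ)-2), c j * z ^ j := by
    apply Finset.sum_equiv (Equiv.neg ℤ)
    · intro i
      simp only [Finset.mem_Icc, Equiv.neg_apply]
      omega
    · intro i hi
      rw [hcdef]
      simp only [Equiv.neg_apply, neg_neg]
      ring
  have hzpow : z ^ ((d:ℤ)-1) = z ^ (d-1) := by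
    have : ((d-1:ℕ):ℤ) = (d:ℤ)-1 := by omega
    rw [← this, zpow_natCast]
  rw [hsumc] at heq
  rw [← hzpow]
  linear_combination heq
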